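/- Let f₀(φ) = 1 + 5φ + 109φ² + 3317φ³ + ⋯ be the unique power-series solution (with constant term 1) of the Picard–Fuchs equation L f = 0 at φ=0. Then the unique solution of the form f₁ = f₀·(g(φ) + log φ) with g a power series vanishing at 0 has g(φ) = 14φ + 287φ² + O(φ³), so that the mirror map is q = φ exp(g(φ)) = φ + 14φ² + 385φ³ + O(φ⁴). -/

import Mathlib

open PowerSeries

/-- The logarithmic derivative D = φ d/dφ on formal power series. -/
noncomputable def Dlog (f : PowerSeries ℚ) : PowerSeries ℚ :=
  PowerSeries.mk fun n => (n : ℚ) * PowerSeries.coeff n f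

/-- The Picard–Fuchs operator L = Σᵢ Aᵢ(φ) D^i of the pfaffian quotient family. -/
noncomputable def PFop (f : PowerSeries ℚ) : PowerSeries ℚ :=
  (1 - 57 * X - 289 * X ^ 2 + X ^ 3) * (X - 3) ^ 2 * Dlog (Dlog (Dlog (Dlog f)))
    + 4 * X * (X - 3) * (85 + 867 * X - 149 * X ^ 2 + X ^ 3) * Dlog (Dlog (Dlog f))
    + 2 * X * (-408 - 7597 * X + 2353 * X ^ 2 - 239 * X ^ 3 + 3 * X ^ 4) * Dlog (Dlog f)
    + 2 * X * (-153 - 4773 * X + 675 * X ^ 2 - 87 * X ^ 3 + 2 * X ^ 4) * Dlog f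
    + X * (-45 - 2166 * X + 12 * X ^ 2 - 26 * X ^ 3 + X ^ 4) * f

/-- The logarithmic derivative on the module of expressions a + b·log φ, represented
as pairs (a, b) of power series: D(a + b log φ) = (D a + b) + (D b) log φ. -/
noncomputable def DlogPair (p : PowerSeries ℚ × PowerSeries ℚ) :
    PowerSeries ℚ × PowerSeries ℚ :=
  (Dlog p.1 + p.2, Dlog p.2)

/-- Multiplication of a log-pair by a power series. -/
noncomputable def smulPair (s : PowerSeries ℚ) (p : PowerSeries ℚ × PowerSeries ℚ) :
    PowerSeries ℚ × PowerSeries ℚ :=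
  (s * p.1, s * p.2)

/-- The Picard–Fuchs operator acting on expressions a + b·log φ. -/
noncomputable def PFopPair (p : PowerSeries ℚ × PowerSeries ℚ) :
    PowerSeries ℚ × PowerSeries ℚ :=
  smulPair ((1 - 57 * X - 289 * X ^ 2 + X ^ 3) * (X - 3) ^ 2)
      (DlogPair (DlogPair (DlogPair (DlogPair p))))
    + smulPair (4 * X * (X - 3) * (85 + 867 * X - 149 * X ^ 2 + X ^ 3))
      (DlogPair (DlogPair (DlogPair p)))
    + smulPair (2 * X * (-408 - 7597 * X + 2353 * X ^ 2 - 239 * X ^ 3 + 3 * X ^ 4))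
      (DlogPair (DlogPair p))
    + smulPair (2 * X * (-153 - 4773 * X + 675 * X ^ 2 - 87 * X ^ 3 + 2 * X ^ 4))
      (DlogPair p)
    + smulPair (X * (-45 - 2166 * X + 12 * X ^ 2 - 26 * X ^ 3 + X ^ 4)) p


@[simp] lemma coeff_Dlog (n : ℕ) (f : PowerSeries ℚ) :
    coeff n (Dlog f) = (n : ℚ) * coeff n f := by simp [Dlog]

@[simp] lemma coeff_mul_ofNat' (n : ℕ) (f : PowerSeries ℚ) (m : ℕ) [m.AtLeastTwo] :
    coeff n (f * (no_index (OfNat.ofNat m) : PowerSeries ℚ)) = coeff n f * OfNat.ofNat m := by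
  rw [show (OfNat.ofNat m : PowerSeries ℚ) = C (OfNat.ofNat m) from by simp [map_ofNat],
    coeff_mul_C]

@[simp] lemma coeff_X_mul'' (n : ℕ) (f : PowerSeries ℚ) :
    coeff n (X * f) = if 1 ≤ n then coeff (n-1) f else 0 := by
  rw [← pow_one (X : PowerSeries ℚ), coeff_X_pow_mul']

lemma coeff_one_mul' (a b : PowerSeries ℚ) :
    coeff 1 (a * b) = constantCoeff a * coeff 1 b + coeff 1 a * constantCoeff b := by
  rw [coeff_mul, Finset.Nat.sum_antidiagonal_eq_sum_range_succ_mk]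
  simp [Finset.sum_range_succ, coeff_zero_eq_constantCoeff]

lemma coeff_two_mul' (a b : PowerSeries ℚ) :
    coeff 2 (a * b) = constantCoeff a * coeff 2 b + coeff 1 a * coeff 1 b
      + coeff 2 a * constantCoeff b := by
  rw [coeff_mul, Finset.Nat.sum_antidiagonal_eq_sum_range_succ_mk]
  simp [Finset.sum_range_succ, coeff_zero_eq_constantCoeff]
  try ring

/-- If f₀ is the power-series solution of the Picard–Fuchs equation with constant
term 1, and f₁ = f₀·(g + log φ) is also a solution with g a power series vanishing
at 0, then g = 14φ + 287φ² + O(φ³) and the mirror map q = φ·exp(g) satisfies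
q = φ + 14φ² + 385φ³ + O(φ⁴). -/
theorem stmt_11 (f₀ g : PowerSeries ℚ)
    (hf₀ : PowerSeries.constantCoeff f₀ = 1)
    (hg : PowerSeries.constantCoeff g = 0)
    (hPF : PFop f₀ = 0)
    (hlog : PFopPair (f₀ * g, f₀) = 0) :
    PowerSeries.coeff 1 g = 14 ∧ PowerSeries.coeff 2 g = 287 ∧
    (PowerSeries.coeff 1 (X * (1 + g + (1/2 : ℚ) • g ^ 2 + (1/6 : ℚ) • g ^ 3)) = 1 ∧
     PowerSeries.coeff 2 (X * (1 + g + (1/2 : ℚ) • g ^ 2 + (1/6 : ℚ) • g ^ 3)) = 14 ∧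
     PowerSeries.coeff 3 (X * (1 + g + (1/2 : ℚ) • g ^ 2 + (1/6 : ℚ) • g ^ 3)) = 385) := by
  -- extract f₀ coefficients
  unfold PFop at hPF
  ring_nf at hPF
  have hp1 := congrArg (coeff 1) hPF
  have hp2 := congrArg (coeff 2) hPF
  simp [coeff_X_pow_mul', coeff_zero_eq_constantCoeff, hf₀] at hp1 hp2
  norm_num at hp1 hp2
  have ha1 : coeff 1 f₀ = 5 := by linarith
  rw [ha1] at hp2
  have ha2 : coeff 2 f₀ = 109 := by linarith
  -- extract g coefficients
  have hfst := congrArg Prod.fst hlog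
  simp only [PFopPair, smulPair, DlogPair, Prod.fst_add, Prod.fst_zero] at hfst
  ring_nf at hfst
  have h1 := congrArg (coeff 1) hfst
  have h2 := congrArg (coeff 2) hfst
  simp [coeff_X_pow_mul', coeff_zero_eq_constantCoeff, hf₀, hg,
    coeff_one_mul', coeff_two_mul', ha1, ha2] at h1 h2
  norm_num [ha1, ha2] at h1 h2
  have hg1 : coeff 1 g = 14 := by linarith
  rw [hg1] at h2
  have hg2 : coeff 2 g = 287 := by linarith
  -- powers of g
  have hgg : (g ^ 2 : PowerSeries ℚ) = g * g := sq g
  have hggg : (g ^ 3 : PowerSeries ℚ) = g ^ 2 * g := by ring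
  have c0g2 : constantCoeff (g ^ 2) = 0 := by simp [map_pow, hg]
  have c0g3 : constantCoeff (g ^ 3) = 0 := by simp [map_pow, hg]
  have c1g2 : coeff 1 (g ^ 2) = 0 := by
    rw [hgg, coeff_one_mul', hg]; ring
  have c2g2 : coeff 2 (g ^ 2) = 196 := by
    rw [hgg, coeff_two_mul', hg, hg1]; ring
  have c1g3 : coeff 1 (g ^ 3) = 0 := by
    rw [hggg, coeff_one_mul', c0g2, c1g2]; ring
  have c2g3 : coeff 2 (g ^ 3) = 0 := by
    rw [hggg, coeff_two_mul', c0g2, c1g2, c2g2, hg]; ring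
  refine ⟨hg1, hg2, ?_, ?_, ?_⟩
  · simp [coeff_zero_eq_constantCoeff, hg, c0g2, c0g3]
  · simp [hg1, c1g2, c1g3]
  · simp [hg2, c2g2, c2g3]
    norm_num
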